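/- arXiv:2308.08106 — 9 statements merged into one kernel-verified Lean document; each statement's English description precedes it below -/
import Mathlib

section
/- If (S, I, R) is a C¹ solution of the SIR system on [0,∞) with S(0) = n, I(0) = a, R(0) = 0, and the total population is conserved, i.e. S(t) + I(t) + R(t) = N for all t ≥ 0 with N = n + a, then the removal function R satisfies the nonlinear differential equation R'(t) = γ(N − n·e^{−μR(t)} − R(t)) for all t ≥ 0, where μ = β/γ. -/
/-- If `(S, I, R)` is a `C¹` solution of the SIR system with conserved total population
`S + I + R = N = n + a`, then `R` satisfies `R'(t) = γ(N − n·e^{−μR(t)} − R(t))`. -/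
theorem sir_removal_ode
    (β γ n a N μ : ℝ) (hβ : 0 < β) (hγ : 0 < γ) (hn : 1 < n) (ha : 1 ≤ a)
    (hN : N = n + a) (hμ : μ = β / γ)
    (S I R : ℝ → ℝ)
    (hI : ∀ t, 0 ≤ t → HasDerivAt I (β * S t * I t - γ * I t) t)
    (hS : ∀ t, 0 ≤ t → HasDerivAt S (-(β * S t * I t)) t)
    (hR : ∀ t, 0 ≤ t → HasDerivAt R (γ * I t) t)
    (hS0 : S 0 = n) (hI0 : I 0 = a) (hR0 : R 0 = 0)
    (hcons : ∀ t, 0 ≤ t → S t + I t + R t = N) :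
    ∀ t, 0 ≤ t → HasDerivAt R (γ * (N - n * Real.exp (-(μ * R t)) - R t)) t := by
  have hμγ : μ * γ = β := by rw [hμ]; field_simp [hγ.ne']
  -- the integrating factor quantity is constant
  have hF : ∀ x, 0 ≤ x →
      HasDerivAt (fun y => S y * Real.exp (μ * R y)) 0 x := by
    intro x hx
    have h1 : HasDerivAt (fun y => Real.exp (μ * R y))
        (Real.exp (μ * R x) * (μ * (γ * I x))) x :=
      (((hR x hx).const_mul μ)).exp
    have h2 := (hS x hx).mul h1
    refine h2.congr_deriv ?_
    rw [← hμγ]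
    ring
  have hconst : ∀ t, 0 ≤ t → S t * Real.exp (μ * R t) = n := by
    intro t ht
    have hcont : ContinuousOn (fun y => S y * Real.exp (μ * R y)) (Set.Icc 0 t) := by
      intro x hx
      exact ((hF x hx.1).continuousAt).continuousWithinAt
    have := constant_of_has_deriv_right_zero hcont
      (fun x hx => ((hF x hx.1).hasDerivWithinAt)) t (Set.right_mem_Icc.2 ht)
    simpa [hR0, hS0] using this
  intro t ht
  have hSt : S t = n * Real.exp (-(μ * R t)) := by
    have h := hconst t ht
    have he : Real.exp (μ * R t) ≠ 0 := Real.exp_ne_zero _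
    rw [Real.exp_neg]
    field_simp
    linarith [h]
  have hIt : I t = N - n * Real.exp (-(μ * R t)) - R t := by
    have := hcons t ht
    rw [hSt] at this
    linarith
  have := hR t ht
  rwa [hIt] at this
end

section
/- If (S, I, R) is a C¹ solution of the SIR system on [0,∞) with S(0) = n, I(0) = a, R(0) = 0 (so that S(t) > 0 for all t ≥ 0), then the number of infectives is bounded by the amplitude: I(t) ≤ −(1/μ)·ln(μ) − 1/μ + a + n − (1/μ)·ln(n) for all t ≥ 0, where μ = β/γ. -/
/-- Amplitude bound for the SIR model: any `C¹` solution (with `S > 0` on `[0,∞)`)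
satisfies `I(t) ≤ −(1/μ)·ln(μ) − 1/μ + a + n − (1/μ)·ln(n)` where `μ = β/γ`. -/
theorem sir_amplitude_bound
    (β γ n a μ : ℝ) (hβ : 0 < β) (hγ : 0 < γ) (hn : 1 < n) (ha : 1 ≤ a)
    (hμ : μ = β / γ)
    (S I R : ℝ → ℝ)
    (hI : ∀ t, 0 ≤ t → HasDerivAt I (β * S t * I t - γ * I t) t)
    (hS : ∀ t, 0 ≤ t → HasDerivAt S (-(β * S t * I t)) t)
    (hR : ∀ t, 0 ≤ t → HasDerivAt R (γ * I t) t)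
    (hS0 : S 0 = n) (hI0 : I 0 = a) (hR0 : R 0 = 0)
    (hSpos : ∀ t, 0 ≤ t → 0 < S t) :
    ∀ t, 0 ≤ t →
      I t ≤ -(1 / μ) * Real.log μ - 1 / μ + a + n - (1 / μ) * Real.log n := by
  have hμpos : 0 < μ := hμ ▸ div_pos hβ hγ
  set V : ℝ → ℝ := fun x => I x + S x - (1 / μ) * Real.log (S x) with hV
  have hVderiv : ∀ x, 0 ≤ x → HasDerivAt V 0 x := by
    intro x hx
    have hSx := hSpos x hx
    have h1 := hI x hx
    have h2 := hS x hx
    have h3 : HasDerivAt (fun y => Real.log (S y)) (-(β * S x * I x) / S x) x :=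
      h2.log hSx.ne'
    have := (h1.add h2).sub (h3.const_mul (1 / μ))
    refine HasDerivAt.congr_deriv this ?_
    rw [hμ]
    field_simp
    ring
  have hVconst : ∀ t, 0 ≤ t → V t = V 0 := by
    intro t ht
    have := constant_of_has_deriv_right_zero (f := V) (a := 0) (b := t)
      (fun x hx => ((hVderiv x hx.1).continuousAt).continuousWithinAt)
      (fun x hx => ((hVderiv x hx.1).hasDerivWithinAt))
    exact this t ⟨ht, le_refl t⟩
  intro t ht
  have hSt := hSpos t ht
  have hVt := hVconst t ht
  have hV0 : V 0 = a + n - (1 / μ) * Real.log n := by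
    simp [hV, hS0, hI0]
  -- key inequality: (1/μ) log s - s ≤ -(1/μ) log μ - 1/μ for s > 0
  have hkey : (1 / μ) * Real.log (S t) - S t ≤ -(1 / μ) * Real.log μ - 1 / μ := by
    have hlog : Real.log (μ * S t) ≤ μ * S t - 1 :=
      Real.log_le_sub_one_of_pos (mul_pos hμpos hSt)
    rw [Real.log_mul hμpos.ne' hSt.ne'] at hlog
    have hc : (1 / μ) * (μ * S t) = S t := by field_simp
    have h2 := mul_le_mul_of_nonneg_left hlog (le_of_lt (by positivity : (0:ℝ) < 1 / μ))
    nlinarith [h2, hc]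
  have : I t = V t - S t + (1 / μ) * Real.log (S t) := by simp [hV]; ring
  rw [this, hVt, hV0]
  linarith
end

section
/- For every relaxation parameter M ≥ γ, the relaxation scheme is non-negativity-preserving: for every k ≥ 0 and every t ≥ 0 one has R_k(t) ≥ 0; moreover 0 ≤ g(R_k(t)) ≤ γn + M·R_k(t) for every k ≥ 0 and t ≥ 0. -/
/-- For `M ≥ γ` the relaxation scheme preserves non-negativity: `R_k(t) ≥ 0` for all
`k ≥ 0`, `t ≥ 0`, and moreover `0 ≤ g(R_k(t)) ≤ γn + M·R_k(t)`, where
`g(r) = γ·n·e^{−μr} + γ·r`. -/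
theorem relaxation_scheme_nonneg
    (β γ n a N μ M : ℝ) (hβ : 0 < β) (hγ : 0 < γ) (hn : 1 < n) (ha : 1 ≤ a)
    (hN : N = n + a) (hμ : μ = β / γ) (hM : γ ≤ M)
    (g : ℝ → ℝ) (hg : ∀ r, g r = γ * n * Real.exp (-(μ * r)) + γ * r)
    (R : ℕ → ℝ → ℝ)
    (hR0 : ∀ t, R 0 t = 0)
    (hinit : ∀ k, R k 0 = 0)
    (hode : ∀ k t, 0 ≤ t →
      HasDerivAt (R (k + 1)) (γ * N - g (R k t) + M * R k t - M * R (k + 1) t) t) :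
    ∀ k t, 0 ≤ t →
      0 ≤ R k t ∧ 0 ≤ g (R k t) ∧ g (R k t) ≤ γ * n + M * R k t := by
  have hμpos : 0 < μ := by rw [hμ]; positivity
  have hnpos : 0 < n := lt_trans one_pos hn
  have hbound : ∀ x : ℝ, 0 ≤ x → 0 ≤ g x ∧ g x ≤ γ * n + M * x := by
    intro x hx
    rw [hg]
    constructor
    · positivity
    · have h1 : Real.exp (-(μ * x)) ≤ 1 := Real.exp_le_one_iff.2 (by nlinarith)
      have h2 : γ * n * Real.exp (-(μ * x)) ≤ γ * n * 1 := by
        apply mul_le_mul_of_nonneg_left h1 (by positivity)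
      nlinarith
  have key : ∀ k, ∀ t, 0 ≤ t → 0 ≤ R k t := by
    intro k
    induction k with
    | zero => intro t _; simp [hR0]
    | succ k ih =>
      intro t ht
      set F : ℝ → ℝ := fun s => Real.exp (M * s) * R (k + 1) s with hFdef
      have hderiv : ∀ s ∈ Set.Ici (0 : ℝ),
          HasDerivAt F (Real.exp (M * s) * (γ * N - g (R k s) + M * R k s)) s := by
        intro s hs
        have h1 : HasDerivAt (fun s : ℝ => M * s) M s := by
          simpa using (hasDerivAt_id s).const_mul M
        have hexp : HasDerivAt (fun s : ℝ => Real.exp (M * s))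
            (Real.exp (M * s) * M) s := h1.exp
        have h2 := hode k s hs
        have : HasDerivAt (fun y => Real.exp (M * y) * R (k + 1) y) (Real.exp (M * s) * M * R (k + 1) s + Real.exp (M * s) * (γ * N - g (R k s) + M * R k s - M * R (k + 1) s)) s := hexp.mul h2
        convert this using 1
        ring
      have hDnonneg : ∀ s ∈ Set.Ici (0 : ℝ),
          0 ≤ Real.exp (M * s) * (γ * N - g (R k s) + M * R k s) := by
        intro s hs
        have hRk := ih s hs
        have hb := (hbound _ hRk).2
        have hexp := Real.exp_pos (M * s)
        have hD : 0 ≤ γ * N - g (R k s) + M * R k s := by rw [hN]; nlinarith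
        exact mul_nonneg hexp.le hD
      have hmono : MonotoneOn F (Set.Ici (0 : ℝ)) := by
        apply monotoneOn_of_deriv_nonneg (convex_Ici 0)
        · exact fun s hs => ((hderiv s hs).continuousAt).continuousWithinAt
        · intro s hs
          rw [interior_Ici] at hs
          exact ((hderiv s (Set.mem_Ici.mpr (le_of_lt (Set.mem_Ioi.mp hs)))).differentiableAt).differentiableWithinAt
        · intro s hs
          rw [interior_Ici] at hs
          rw [(hderiv s (Set.mem_Ici.mpr (le_of_lt (Set.mem_Ioi.mp hs)))).deriv]
          exact hDnonneg s (Set.mem_Ici.mpr (le_of_lt (Set.mem_Ioi.mp hs)))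
      have h0 : F 0 ≤ F t := hmono Set.self_mem_Ici ht ht
      have hF0 : F 0 = 0 := by simp [hFdef, hinit]
      rw [hF0] at h0
      have hFt : F t = Real.exp (M * t) * R (k + 1) t := rfl
      rw [hFt] at h0
      have hexp := Real.exp_pos (M * t)
      exact nonneg_of_mul_nonneg_right h0 hexp
  intro k t ht
  have h := key k t ht
  exact ⟨h, (hbound _ h).1, (hbound _ h).2⟩
end

section
/- Let M ≥ γ, let R : [0,T] → ℝ be the nonnegative C¹ solution of R'(t) = γ(N − n·e^{−μR(t)} − R(t)), R(0) = 0, and let (R_k) be the relaxation scheme. Then for every k ≥ 1 and every t ∈ [0,T], the error E_k(t) = R_k(t) − R(t) satisfies |E_k(t)|² ≤ (M + γnμ − γ)²·t·∫₀ᵗ |E_{k−1}(s)|² ds. -/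
/-- Lipschitz bound for `exp ∘ neg` on nonnegatives. -/
lemma exp_neg_lip (u v : ℝ) (hu : 0 ≤ u) (hv : 0 ≤ v) :
    |Real.exp (-u) - Real.exp (-v)| ≤ |u - v| := by
  have key : ∀ p q : ℝ, 0 ≤ p → p ≤ q → Real.exp (-p) - Real.exp (-q) ≤ q - p := by
    intro p q hp hpq
    have h1 : Real.exp (-p) ≤ 1 := Real.exp_le_one_iff.2 (by linarith)
    have h2 : (p - q) + 1 ≤ Real.exp (p - q) := Real.add_one_le_exp _
    have h3 : Real.exp (-q) = Real.exp (-p) * Real.exp (p - q) := by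
      rw [← Real.exp_add]; ring_nf
    have h4 : Real.exp (p - q) ≤ 1 := Real.exp_le_one_iff.2 (by linarith)
    have h5 : 0 < Real.exp (-p) := Real.exp_pos _
    nlinarith
  rcases le_total u v with h | h
  · rw [abs_of_nonneg (by have := Real.exp_le_exp.2 (neg_le_neg h); linarith),
      abs_of_nonpos (by linarith)]
    simpa using key u v hu h
  · rw [abs_of_nonpos (by have := Real.exp_le_exp.2 (neg_le_neg h); linarith),
      abs_of_nonneg (by linarith)]
    have := key v u hv h
    linarith

/-- Cauchy–Schwarz for interval integrals of continuous functions. -/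
lemma sq_intervalIntegral_le (f : ℝ → ℝ) (t : ℝ) (ht : 0 ≤ t)
    (hf : ContinuousOn f (Set.Icc 0 t)) :
    (∫ s in (0:ℝ)..t, f s) ^ 2 ≤ t * ∫ s in (0:ℝ)..t, (f s) ^ 2 := by
  have huIcc : Set.uIcc (0:ℝ) t = Set.Icc 0 t := Set.uIcc_of_le ht
  have hfi : IntervalIntegrable f MeasureTheory.volume 0 t :=
    (huIcc ▸ hf).intervalIntegrable
  have hf2 : ContinuousOn (fun s => (f s) ^ 2) (Set.Icc 0 t) := hf.pow 2
  have hf2i : IntervalIntegrable (fun s => (f s) ^ 2) MeasureTheory.volume 0 t :=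
    (huIcc ▸ hf2).intervalIntegrable
  set I := ∫ s in (0:ℝ)..t, f s with hI
  set J := ∫ s in (0:ℝ)..t, (f s) ^ 2 with hJ
  have hnn : 0 ≤ ∫ s in (0:ℝ)..t, (t * f s - I) ^ 2 := by
    apply intervalIntegral.integral_nonneg ht
    intro s _; positivity
  have hexp : (∫ s in (0:ℝ)..t, (t * f s - I) ^ 2)
      = t ^ 2 * J - (2 * t * I) * I + I ^ 2 * t := by
    have : ∀ s, (t * f s - I) ^ 2 = t ^ 2 * (f s) ^ 2 - (2 * t * I) * f s + I ^ 2 := by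
      intro s; ring
    simp_rw [this]
    rw [intervalIntegral.integral_add ((hf2i.const_mul _).sub (hfi.const_mul _))
        intervalIntegrable_const,
      intervalIntegral.integral_sub (hf2i.const_mul _) (hfi.const_mul _),
      intervalIntegral.integral_const_mul, intervalIntegral.integral_const_mul,
      intervalIntegral.integral_const]
    simp [hI, hJ]; ring
  rw [hexp] at hnn
  rcases eq_or_lt_of_le ht with h | h
  · simp [hI, ← h]
  · nlinarith

/-- Error recursion for the relaxation scheme: for `k ≥ 1` and `t ∈ [0,T]`, the error
`E_k = R_k − R` satisfies `|E_k(t)|² ≤ (M + γnμ − γ)²·t·∫₀ᵗ |E_{k−1}(s)|² ds`. -/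
theorem relaxation_error_recursion
    (β γ n a N μ M T : ℝ) (hβ : 0 < β) (hγ : 0 < γ) (hn : 1 < n) (ha : 1 ≤ a)
    (hN : N = n + a) (hμ : μ = β / γ) (hM : γ ≤ M) (hT : 0 < T)
    (g : ℝ → ℝ) (hg : ∀ r, g r = γ * n * Real.exp (-(μ * r)) + γ * r)
    (R : ℝ → ℝ)
    (hRode : ∀ t ∈ Set.Icc (0 : ℝ) T,
      HasDerivAt R (γ * (N - n * Real.exp (-(μ * R t)) - R t)) t)
    (hRinit : R 0 = 0)
    (hRpos : ∀ t ∈ Set.Icc (0 : ℝ) T, 0 ≤ R t)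
    (Rs : ℕ → ℝ → ℝ)
    (hRs0 : ∀ t, Rs 0 t = 0)
    (hinit : ∀ k, Rs k 0 = 0)
    (hode : ∀ k, ∀ t ∈ Set.Icc (0 : ℝ) T,
      HasDerivAt (Rs (k + 1)) (γ * N - g (Rs k t) + M * Rs k t - M * Rs (k + 1) t) t)
    (hpos : ∀ k, ∀ t ∈ Set.Icc (0 : ℝ) T, 0 ≤ Rs k t) :
    ∀ k : ℕ, 1 ≤ k → ∀ t ∈ Set.Icc (0 : ℝ) T,
      |Rs k t - R t| ^ 2 ≤
        (M + γ * n * μ - γ) ^ 2 * t * ∫ s in (0 : ℝ)..t, |Rs (k - 1) s - R s| ^ 2 := by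
  intro k hk t ht
  obtain ⟨m, rfl⟩ : ∃ m, k = m + 1 := ⟨k - 1, (Nat.succ_pred_eq_of_pos hk).symm⟩
  simp only [Nat.add_sub_cancel]
  have ht0 : (0:ℝ) ≤ t := ht.1
  have htT : t ≤ T := ht.2
  have hsub : Set.Icc (0:ℝ) t ⊆ Set.Icc (0:ℝ) T := Set.Icc_subset_Icc le_rfl htT
  have huIcc : Set.uIcc (0:ℝ) t = Set.Icc 0 t := Set.uIcc_of_le ht0
  set L := M + γ * n * μ - γ with hL
  have hμpos : 0 < μ := hμ ▸ div_pos hβ hγ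
  have hL0 : 0 ≤ L := by
    have : 0 ≤ γ * n * μ := by positivity
    simp only [hL]; linarith
  -- continuity
  have hRc : ContinuousOn R (Set.Icc 0 T) := fun s hs =>
    ((hRode s hs).continuousAt).continuousWithinAt
  have hRsc : ∀ j, ContinuousOn (Rs j) (Set.Icc 0 T) := by
    intro j
    cases j with
    | zero =>
      have : Rs 0 = fun _ => (0:ℝ) := funext hRs0
      rw [this]; exact continuousOn_const
    | succ j => exact fun s hs => ((hode j s hs).continuousAt).continuousWithinAt
  have hgc : Continuous g := by
    have : g = fun r => γ * n * Real.exp (-(μ * r)) + γ * r := funext hg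
    rw [this]; fun_prop
  -- the "forcing" term
  set φ := fun s => M * (Rs m s - R s) - (g (Rs m s) - g (R s)) with hφ
  have hφc : ContinuousOn φ (Set.Icc 0 T) := by
    apply ContinuousOn.sub
    · exact continuousOn_const.mul ((hRsc m).sub hRc)
    · exact (hgc.comp_continuousOn (hRsc m)).sub (hgc.comp_continuousOn hRc)
  -- derivative of the error
  have hE' : ∀ s ∈ Set.Icc (0:ℝ) T,
      HasDerivAt (fun u => Rs (m+1) u - R u) (φ s - M * (Rs (m+1) s - R s)) s := by
    intro s hs
    have h1 := (hode m s hs).sub (hRode s hs)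
    refine h1.congr_deriv ?_
    simp only [hφ, hg]
    ring
  -- integrating factor
  set F := fun s => Real.exp (M * s) * (Rs (m+1) s - R s) with hF
  have hF' : ∀ s ∈ Set.Icc (0:ℝ) T,
      HasDerivAt F (Real.exp (M * s) * φ s) s := by
    intro s hs
    have hlin : HasDerivAt (fun u : ℝ => M * u) M s := by
      simpa using (hasDerivAt_id s).const_mul M
    have hexp : HasDerivAt (fun u => Real.exp (M * u)) (Real.exp (M * s) * M) s :=
      (Real.hasDerivAt_exp (M * s)).comp s hlin
    have := hexp.mul (hE' s hs)
    refine this.congr_deriv ?_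
    ring
  have hφci : ContinuousOn (fun s => Real.exp (M * s) * φ s) (Set.Icc 0 t) :=
    (Real.continuous_exp.comp (continuous_const.mul continuous_id)).continuousOn.mul
      (hφc.mono hsub)
  have hint : IntervalIntegrable (fun s => Real.exp (M * s) * φ s)
      MeasureTheory.volume 0 t := (huIcc ▸ hφci).intervalIntegrable
  have hFTC : ∫ s in (0:ℝ)..t, Real.exp (M * s) * φ s = F t - F 0 :=
    intervalIntegral.integral_eq_sub_of_hasDerivAt
      (fun s hs => hF' s (hsub (huIcc ▸ hs))) hint
  have hF0 : F 0 = 0 := by simp [hF, hinit, hRinit]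
  -- pointwise bound on φ
  have hφbd : ∀ s ∈ Set.Icc (0:ℝ) t, |φ s| ≤ L * |Rs m s - R s| := by
    intro s hs
    have hsT := hsub hs
    set x := Rs m s with hx
    set y := R s with hy
    have hx0 : 0 ≤ x := hpos m s hsT
    have hy0 : 0 ≤ y := hRpos s hsT
    have key : φ s = (M - γ) * (x - y) - γ * n * (Real.exp (-(μ * x)) - Real.exp (-(μ * y))) := by
      simp only [hφ, hg]; ring
    have hlip : |Real.exp (-(μ * x)) - Real.exp (-(μ * y))| ≤ μ * |x - y| := by
      have := exp_neg_lip (μ * x) (μ * y) (by positivity) (by positivity)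
      calc |Real.exp (-(μ * x)) - Real.exp (-(μ * y))| ≤ |μ * x - μ * y| := this
        _ = μ * |x - y| := by rw [show μ * x - μ * y = μ * (x - y) by ring, abs_mul,
              abs_of_pos hμpos]
    calc |φ s| ≤ |(M - γ) * (x - y)| + |γ * n * (Real.exp (-(μ * x)) - Real.exp (-(μ * y)))| := by
          rw [key]; exact abs_sub _ _
      _ = (M - γ) * |x - y| + (γ * n) * |Real.exp (-(μ * x)) - Real.exp (-(μ * y))| := by
          rw [abs_mul, abs_mul, abs_of_nonneg (by linarith : (0:ℝ) ≤ M - γ),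
            abs_of_nonneg (by positivity : (0:ℝ) ≤ γ * n)]
      _ ≤ (M - γ) * |x - y| + (γ * n) * (μ * |x - y|) := by
          have : 0 ≤ γ * n := by positivity
          nlinarith
      _ = L * |x - y| := by simp only [hL]; ring
  -- integrability of |E_{m}| and its square
  have hEpc : ContinuousOn (fun s => |Rs m s - R s|) (Set.Icc 0 t) :=
    (((hRsc m).sub hRc).mono hsub).abs
  have hEpi : IntervalIntegrable (fun s => |Rs m s - R s|) MeasureTheory.volume 0 t :=
    (huIcc ▸ hEpc).intervalIntegrable
  have hEp2i : IntervalIntegrable (fun s => |Rs m s - R s| ^ 2) MeasureTheory.volume 0 t :=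
    (huIcc ▸ hEpc.pow 2).intervalIntegrable
  -- main estimate: |E(t)| ≤ L * ∫ |E_{m}|
  have hmain : |Rs (m+1) t - R t| ≤ L * ∫ s in (0:ℝ)..t, |Rs m s - R s| := by
    have hexppos : 0 < Real.exp (M * t) := Real.exp_pos _
    have h1 : Real.exp (M * t) * |Rs (m+1) t - R t|
        = |∫ s in (0:ℝ)..t, Real.exp (M * s) * φ s| := by
      rw [hFTC, hF0, sub_zero, hF, abs_mul, abs_of_pos hexppos]
    have h2 : |∫ s in (0:ℝ)..t, Real.exp (M * s) * φ s|
        ≤ ∫ s in (0:ℝ)..t, |Real.exp (M * s) * φ s| :=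
      intervalIntegral.abs_integral_le_integral_abs ht0
    have habsint : IntervalIntegrable (fun s => |Real.exp (M * s) * φ s|)
        MeasureTheory.volume 0 t := (huIcc ▸ hφci.abs).intervalIntegrable
    have hbig : IntervalIntegrable (fun s => Real.exp (M * t) * (L * |Rs m s - R s|))
        MeasureTheory.volume 0 t := (hEpi.const_mul L).const_mul _
    have h3 : ∫ s in (0:ℝ)..t, |Real.exp (M * s) * φ s|
        ≤ ∫ s in (0:ℝ)..t, Real.exp (M * t) * (L * |Rs m s - R s|) := by
      apply intervalIntegral.integral_mono_on ht0 habsint hbig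
      intro s hs
      have hM0 : 0 ≤ M := le_trans (le_of_lt hγ) hM
      have hexple : Real.exp (M * s) ≤ Real.exp (M * t) :=
        Real.exp_le_exp.2 (mul_le_mul_of_nonneg_left hs.2 hM0)
      have hb := hφbd s hs
      rw [abs_mul, abs_of_pos (Real.exp_pos _)]
      have h0 : 0 ≤ |φ s| := abs_nonneg _
      nlinarith [Real.exp_pos (M * s), abs_nonneg (Rs m s - R s)]
    have h4 : ∫ s in (0:ℝ)..t, Real.exp (M * t) * (L * |Rs m s - R s|)
        = Real.exp (M * t) * (L * ∫ s in (0:ℝ)..t, |Rs m s - R s|) := by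
      rw [intervalIntegral.integral_const_mul, intervalIntegral.integral_const_mul]
    have := h1 ▸ (h2.trans (h3.trans_eq h4))
    exact le_of_mul_le_mul_left this hexppos
  -- conclude via Cauchy–Schwarz
  have hintnn : 0 ≤ ∫ s in (0:ℝ)..t, |Rs m s - R s| :=
    intervalIntegral.integral_nonneg ht0 (fun s _ => abs_nonneg _)
  have hsq : |Rs (m+1) t - R t| ^ 2 ≤ (L * ∫ s in (0:ℝ)..t, |Rs m s - R s|) ^ 2 :=
    pow_le_pow_left₀ (abs_nonneg _) hmain 2
  have hCS : (∫ s in (0:ℝ)..t, |Rs m s - R s|) ^ 2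
      ≤ t * ∫ s in (0:ℝ)..t, |Rs m s - R s| ^ 2 :=
    sq_intervalIntegral_le _ t ht0 hEpc
  calc |Rs (m+1) t - R t| ^ 2
      ≤ (L * ∫ s in (0:ℝ)..t, |Rs m s - R s|) ^ 2 := hsq
    _ = L ^ 2 * (∫ s in (0:ℝ)..t, |Rs m s - R s|) ^ 2 := by ring
    _ ≤ L ^ 2 * (t * ∫ s in (0:ℝ)..t, |Rs m s - R s| ^ 2) :=
        mul_le_mul_of_nonneg_left hCS (by positivity)
    _ = L ^ 2 * t * ∫ s in (0:ℝ)..t, |Rs m s - R s| ^ 2 := by ring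
end

section
/- Assume nμ < 1 and M ≥ γ. Let R : [0,T] → ℝ be the nonnegative C¹ solution of R'(t) = γ(N − n·e^{−μR(t)} − R(t)), R(0) = 0, and let (R_k) be the relaxation scheme. Then for every k ≥ 1, max_{0 ≤ t ≤ T} |R_k(t) − R(t)| ≤ √((M + γnμ − γ)/(M − γnμ + γ)) · max_{0 ≤ t ≤ T} |R_{k−1}(t) − R(t)|. -/
/-- Contraction estimate for the relaxation scheme when `nμ < 1`: for every `k ≥ 1`,
`max_{[0,T]} |R_k − R| ≤ √((M + γnμ − γ)/(M − γnμ + γ)) · max_{[0,T]} |R_{k−1} − R|`. -/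
theorem relaxation_contraction_step
    (β γ n a N μ M T : ℝ) (hβ : 0 < β) (hγ : 0 < γ) (hn : 1 < n) (ha : 1 ≤ a)
    (hN : N = n + a) (hμ : μ = β / γ) (hsmall : n * μ < 1) (hM : γ ≤ M) (hT : 0 < T)
    (g : ℝ → ℝ) (hg : ∀ r, g r = γ * n * Real.exp (-(μ * r)) + γ * r)
    (R : ℝ → ℝ)
    (hRode : ∀ t ∈ Set.Icc (0 : ℝ) T,
      HasDerivAt R (γ * (N - n * Real.exp (-(μ * R t)) - R t)) t)
    (hRinit : R 0 = 0)
    (hRpos : ∀ t ∈ Set.Icc (0 : ℝ) T, 0 ≤ R t)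
    (Rs : ℕ → ℝ → ℝ)
    (hRs0 : ∀ t, Rs 0 t = 0)
    (hinit : ∀ k, Rs k 0 = 0)
    (hode : ∀ k, ∀ t ∈ Set.Icc (0 : ℝ) T,
      HasDerivAt (Rs (k + 1)) (γ * N - g (Rs k t) + M * Rs k t - M * Rs (k + 1) t) t)
    (hpos : ∀ k, ∀ t ∈ Set.Icc (0 : ℝ) T, 0 ≤ Rs k t) :
    ∀ k : ℕ, 1 ≤ k → ∀ t ∈ Set.Icc (0 : ℝ) T,
      |Rs k t - R t| ≤
        Real.sqrt ((M + γ * n * μ - γ) / (M - γ * n * μ + γ)) *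
          sSup ((fun s => |Rs (k - 1) s - R s|) '' Set.Icc (0 : ℝ) T) := by
  intro k hk t ht
  obtain ⟨m, rfl⟩ : ∃ m, k = m + 1 := ⟨k - 1, (Nat.succ_pred_eq_of_pos hk).symm⟩
  simp only [Nat.add_sub_cancel]
  have hμpos : 0 < μ := by rw [hμ]; positivity
  have hnpos : 0 < n := lt_trans one_pos hn
  have hMpos : 0 < M := lt_of_lt_of_le hγ hM
  have hM0 : M ≠ 0 := ne_of_gt hMpos
  obtain ⟨L, hL⟩ : ∃ L, L = M + γ * n * μ - γ := ⟨_, rfl⟩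
  obtain ⟨D, hD⟩ : ∃ D, D = M - γ * n * μ + γ := ⟨_, rfl⟩
  obtain ⟨E, hE⟩ : ∃ E, E = sSup ((fun s => |Rs m s - R s|) '' Set.Icc (0 : ℝ) T) := ⟨_, rfl⟩
  rw [← hL, ← hD, ← hE]
  have hγnμ : 0 < γ * n * μ := by positivity
  have hLpos : 0 < L := by rw [hL]; nlinarith
  have hDpos : 0 < D := by rw [hD]; nlinarith
  -- continuity facts
  have hRcont : ContinuousOn R (Set.Icc 0 T) := fun s hs =>
    ((hRode s hs).continuousAt).continuousWithinAt
  have hRscont : ∀ j, ContinuousOn (Rs j) (Set.Icc (0:ℝ) T) := by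
    intro j
    cases j with
    | zero =>
        have : Rs 0 = fun _ => (0:ℝ) := funext hRs0
        rw [this]; exact continuousOn_const
    | succ i => exact fun s hs => ((hode i s hs).continuousAt).continuousWithinAt
  have hcont : ContinuousOn (fun s => |Rs m s - R s|) (Set.Icc 0 T) :=
    ((hRscont m).sub hRcont).abs
  have hbdd : BddAbove ((fun s => |Rs m s - R s|) '' Set.Icc (0:ℝ) T) :=
    (isCompact_Icc.image_of_continuousOn hcont).bddAbove
  have hEb : ∀ s ∈ Set.Icc (0:ℝ) T, |Rs m s - R s| ≤ E :=
    fun s hs => hE ▸ le_csSup hbdd (Set.mem_image_of_mem _ hs)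
  have hE0 : 0 ≤ E := le_trans (abs_nonneg _) (hEb 0 ⟨le_refl 0, le_of_lt hT⟩)
  -- Lipschitz bound on exp on the nonpositive side
  have hexpLip : ∀ x y : ℝ, 0 ≤ x → 0 ≤ y →
      |Real.exp (-(μ * x)) - Real.exp (-(μ * y))| ≤ μ * |x - y| := by
    have key : ∀ x y : ℝ, 0 ≤ x → x ≤ y →
        Real.exp (-(μ * x)) - Real.exp (-(μ * y)) ≤ μ * (y - x) := by
      intro x y hx hxy
      have h1 : Real.exp (-(μ * y)) = Real.exp (-(μ * x)) * Real.exp (-(μ * (y - x))) := by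
        rw [← Real.exp_add]; ring_nf
      have h2 : Real.exp (-(μ * x)) ≤ 1 := Real.exp_le_one_iff.mpr (by nlinarith)
      have h3 : -(μ * (y - x)) + 1 ≤ Real.exp (-(μ * (y - x))) := Real.add_one_le_exp _
      have h4 : Real.exp (-(μ * (y - x))) ≤ 1 := Real.exp_le_one_iff.mpr (by nlinarith)
      calc Real.exp (-(μ * x)) - Real.exp (-(μ * y))
          = Real.exp (-(μ * x)) * (1 - Real.exp (-(μ * (y - x)))) := by rw [h1]; ring
        _ ≤ 1 * (μ * (y - x)) := by
            apply mul_le_mul h2 (by linarith) (by linarith) zero_le_one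
        _ = μ * (y - x) := one_mul _
    intro x y hx hy
    rcases le_total x y with hxy | hxy
    · have hmono : Real.exp (-(μ * y)) ≤ Real.exp (-(μ * x)) :=
        Real.exp_le_exp.mpr (by nlinarith)
      rw [abs_of_nonneg (by linarith), abs_of_nonpos (by linarith)]
      have := key x y hx hxy
      linarith
    · have hmono : Real.exp (-(μ * x)) ≤ Real.exp (-(μ * y)) :=
        Real.exp_le_exp.mpr (by nlinarith)
      rw [abs_of_nonpos (by linarith), abs_of_nonneg (by linarith)]
      have := key y x hy hxy
      linarith
  -- the forcing term and its bound
  have hhb : ∀ s ∈ Set.Icc (0:ℝ) T,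
      |(M - γ) * (Rs m s - R s) -
        γ * n * (Real.exp (-(μ * Rs m s)) - Real.exp (-(μ * R s)))| ≤ L * E := by
    intro s hs
    have h1 := hEb s hs
    have h2 := hexpLip (Rs m s) (R s) (hpos m s hs) (hRpos s hs)
    have h3 : μ * |Rs m s - R s| ≤ μ * E := by
      apply mul_le_mul_of_nonneg_left h1 hμpos.le
    have h4 : |Real.exp (-(μ * Rs m s)) - Real.exp (-(μ * R s))| ≤ μ * E := le_trans h2 h3
    have hMγ : (0:ℝ) ≤ M - γ := by linarith
    rw [abs_le] at h1 h4 ⊢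
    have hγn : (0:ℝ) ≤ γ * n := by positivity
    constructor
    · rw [hL]
      linarith [mul_le_mul_of_nonneg_left h1.1 hMγ, mul_le_mul_of_nonneg_left h4.2 hγn]
    · rw [hL]
      linarith [mul_le_mul_of_nonneg_left h1.2 hMγ, mul_le_mul_of_nonneg_left h4.1 hγn]
  -- main Gronwall-type estimate, for both signs at once
  have main : ∀ c : ℝ, |c| ≤ 1 → ∀ s ∈ Set.Icc (0:ℝ) T,
      c * (Real.exp (M * s) * (Rs (m + 1) s - R s)) ≤ L * E * (Real.exp (M * s) - 1) / M := by
    intro c hc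
    set φ : ℝ → ℝ := fun s =>
      L * E * (Real.exp (M * s) - 1) / M -
        c * (Real.exp (M * s) * (Rs (m + 1) s - R s)) with hφ
    have hφd : ∀ s ∈ Set.Icc (0:ℝ) T, HasDerivAt φ
        (Real.exp (M * s) * (L * E -
          c * ((M - γ) * (Rs m s - R s) -
            γ * n * (Real.exp (-(μ * Rs m s)) - Real.exp (-(μ * R s)))))) s := by
      intro s hs
      have hlin : HasDerivAt (fun x : ℝ => M * x) M s := by
        simpa using (hasDerivAt_id s).const_mul M
      have hexp : HasDerivAt (fun x : ℝ => Real.exp (M * x)) (Real.exp (M * s) * M) s :=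
        hlin.exp
      have he : HasDerivAt (fun x => Rs (m + 1) x - R x)
          ((γ * N - g (Rs m s) + M * Rs m s - M * Rs (m + 1) s) -
            (γ * (N - n * Real.exp (-(μ * R s)) - R s))) s :=
        (hode m s hs).sub (hRode s hs)
      have hprod := (hexp.mul he).const_mul c
      have hconst : HasDerivAt (fun x => L * E * (Real.exp (M * x) - 1) / M)
          (L * E * (Real.exp (M * s) * M) / M) s := by
        simpa using ((hexp.sub_const 1).const_mul (L * E)).div_const M
      have := hconst.sub hprod
      convert this using 1
      · rfl
      · rfl
      · rfl
      simp only [hg]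
      field_simp
      ring
    have hmono : MonotoneOn φ (Set.Icc (0:ℝ) T) := by
      apply monotoneOn_of_deriv_nonneg (convex_Icc 0 T)
      · exact fun s hs => (hφd s hs).continuousAt.continuousWithinAt
      · exact fun s hs =>
          ((hφd s (interior_subset hs)).differentiableAt).differentiableWithinAt
      · intro s hs
        rw [(hφd s (interior_subset hs)).deriv]
        have hb := hhb s (interior_subset hs)
        have hcb : c * ((M - γ) * (Rs m s - R s) -
            γ * n * (Real.exp (-(μ * Rs m s)) - Real.exp (-(μ * R s)))) ≤ L * E := by
          calc c * _ ≤ |c * ((M - γ) * (Rs m s - R s) -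
              γ * n * (Real.exp (-(μ * Rs m s)) - Real.exp (-(μ * R s))))| := le_abs_self _
            _ = |c| * |(M - γ) * (Rs m s - R s) -
              γ * n * (Real.exp (-(μ * Rs m s)) - Real.exp (-(μ * R s)))| := abs_mul _ _
            _ ≤ 1 * (L * E) := mul_le_mul hc hb (abs_nonneg _) zero_le_one
            _ = L * E := one_mul _
        exact mul_nonneg (Real.exp_pos _).le (by linarith)
    intro s hs
    have h0 : φ 0 = 0 := by simp [hφ, hinit, hRinit]
    have hle := hmono (Set.left_mem_Icc.mpr hT.le) hs hs.1
    rw [h0] at hle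
    simp only [hφ] at hle
    linarith
  -- deduce the uniform bound |e_k| ≤ L*E/M
  have h1 := main 1 (by norm_num) t ht
  have h2 := main (-1) (by norm_num) t ht
  have hexppos := Real.exp_pos (M * t)
  have hLE : 0 ≤ L * E := mul_nonneg hLpos.le hE0
  rw [one_mul, le_div_iff₀ hMpos] at h1
  rw [le_div_iff₀ hMpos] at h2
  have hfinal : |Rs (m + 1) t - R t| ≤ L * E / M := by
    rw [abs_le]
    constructor
    · rw [neg_le, le_div_iff₀ hMpos]
      have hA : Real.exp (M * t) * (-(Rs (m + 1) t - R t) * M) ≤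
          Real.exp (M * t) * (L * E) := by linarith [h2, hLE]
      exact le_of_mul_le_mul_left hA hexppos
    · rw [le_div_iff₀ hMpos]
      have hA : Real.exp (M * t) * ((Rs (m + 1) t - R t) * M) ≤
          Real.exp (M * t) * (L * E) := by linarith [h1, hLE]
      exact le_of_mul_le_mul_left hA hexppos
  -- compare L/M with sqrt (L/D)
  have hLpos' : 0 < M + γ * n * μ - γ := hL ▸ hLpos
  have hsq : (L / M) ^ 2 ≤ L / D := by
    rw [div_pow, div_le_div_iff₀ (by positivity) hDpos, hL, hD]
    linarith only [mul_nonneg hLpos'.le (sq_nonneg (γ * n * μ - γ))]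
  have hsqrt : L / M ≤ Real.sqrt (L / D) := by
    have := Real.sqrt_le_sqrt hsq
    rwa [Real.sqrt_sq (by positivity)] at this
  calc |Rs (m + 1) t - R t| ≤ L * E / M := hfinal
    _ = (L / M) * E := by ring
    _ ≤ Real.sqrt (L / D) * E := mul_le_mul_of_nonneg_right hsqrt hE0
end

section
/- Assume nμ < 1 and M ≥ γ. Let R : [0,T] → ℝ be the nonnegative C¹ solution of R'(t) = γ(N − n·e^{−μR(t)} − R(t)), R(0) = 0, and let (R_k) be the relaxation scheme. Then with c = √((M + γnμ − γ)/(M − γnμ + γ)) ∈ [0,1), one has for every k ≥ 1: max_{0 ≤ t ≤ T} |R_k(t) − R(t)| ≤ c^k · max_{0 ≤ t ≤ T} |R(t)|. -/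
/-- One-sided Gronwall-type bound: if `d 0 = 0`, `d' = -M d + h` on `[0,T]` with `h ≤ C`,
then `d ≤ C / M` on `[0,T]`. -/
lemma relax_one_side (M C T : ℝ) (hM : 0 < M) (hC : 0 ≤ C)
    (d h : ℝ → ℝ) (hd0 : d 0 = 0)
    (hder : ∀ t ∈ Set.Icc (0 : ℝ) T, HasDerivAt d (-M * d t + h t) t)
    (hh : ∀ t ∈ Set.Icc (0 : ℝ) T, h t ≤ C) :
    ∀ t ∈ Set.Icc (0 : ℝ) T, d t ≤ C / M := by
  set G : ℝ → ℝ := fun t => C / M * Real.exp (M * t) - Real.exp (M * t) * d t with hG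
  have hGder : ∀ t ∈ Set.Icc (0 : ℝ) T,
      HasDerivAt G (Real.exp (M * t) * (C - h t)) t := by
    intro t ht
    have hexp : HasDerivAt (fun t => Real.exp (M * t)) (Real.exp (M * t) * M) t := by
      simpa using ((hasDerivAt_id t).const_mul M).exp
    have h1 : HasDerivAt G (C / M * (Real.exp (M * t) * M) -
        (Real.exp (M * t) * M * d t + Real.exp (M * t) * (-M * d t + h t))) t :=
      (hexp.const_mul (C / M)).sub (hexp.mul (hder t ht))
    convert h1 using 1
    field_simp
    ring
  have hmono : MonotoneOn G (Set.Icc (0 : ℝ) T) := by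
    apply monotoneOn_of_deriv_nonneg (convex_Icc 0 T)
    · intro t ht
      exact ((hGder t ht).continuousAt).continuousWithinAt
    · intro t ht
      exact ((hGder t (interior_subset ht)).differentiableAt).differentiableWithinAt
    · intro t ht
      rw [(hGder t (interior_subset ht)).deriv]
      have h2 := hh t (interior_subset ht)
      have h3 := (Real.exp_pos (M * t)).le
      nlinarith
  intro t ht
  have h0 : (0 : ℝ) ∈ Set.Icc (0 : ℝ) T := ⟨le_refl _, le_trans ht.1 ht.2⟩
  have hle : G 0 ≤ G t := hmono h0 ht ht.1
  have hG0 : G 0 = C / M := by simp [hG, hd0]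
  have hexp_pos : 0 < Real.exp (M * t) := Real.exp_pos _
  have hCM : 0 ≤ C / M := div_nonneg hC hM.le
  rw [hG0] at hle
  have : Real.exp (M * t) * d t ≤ C / M * Real.exp (M * t) := by
    simp only [hG] at hle; nlinarith
  have := (mul_le_mul_iff_right₀ hexp_pos).mp (by linarith [this] : Real.exp (M * t) * d t ≤ Real.exp (M * t) * (C / M))
  exact this

/-- Two-sided version. -/
lemma relax_abs_bound (M C T : ℝ) (hM : 0 < M) (hC : 0 ≤ C)
    (d h : ℝ → ℝ) (hd0 : d 0 = 0)
    (hder : ∀ t ∈ Set.Icc (0 : ℝ) T, HasDerivAt d (-M * d t + h t) t)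
    (hh : ∀ t ∈ Set.Icc (0 : ℝ) T, |h t| ≤ C) :
    ∀ t ∈ Set.Icc (0 : ℝ) T, |d t| ≤ C / M := by
  intro t ht
  have h1 := relax_one_side M C T hM hC d h hd0 hder
    (fun t ht => (abs_le.mp (hh t ht)).2) t ht
  have h2 := relax_one_side M C T hM hC (fun s => -d s) (fun s => -h s)
    (by simp [hd0])
    (fun s hs => by
      have := (hder s hs).neg
      exact this.congr_deriv (by ring))
    (fun s hs => by
      have := (abs_le.mp (hh s hs)).1
      linarith) t ht
  rw [abs_le]
  constructor
  · simpa using neg_le_neg h2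
  · exact h1

/-- Lipschitz bound on the exponential: for `0 ≤ μ`, `0 ≤ x ≤ y`,
`|exp(-μx) - exp(-μy)| ≤ μ (y - x)`. -/
lemma relax_exp_lip {μ : ℝ} (hμ : 0 ≤ μ) {x y : ℝ} (hx : 0 ≤ x) (hxy : x ≤ y) :
    |Real.exp (-(μ * x)) - Real.exp (-(μ * y))| ≤ μ * (y - x) := by
  have hle : Real.exp (-(μ * y)) ≤ Real.exp (-(μ * x)) := by
    apply Real.exp_le_exp.mpr; nlinarith
  rw [abs_of_nonneg (by linarith)]
  have e3 : Real.exp (-(μ * y)) = Real.exp (-(μ * x)) * Real.exp (-(μ * (y - x))) := by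
    rw [← Real.exp_add]; ring_nf
  have e1 := Real.add_one_le_exp (-(μ * (y - x)))
  have e2 : Real.exp (-(μ * x)) ≤ 1 := Real.exp_le_one_iff.mpr (by nlinarith)
  have e4 : 0 < Real.exp (-(μ * x)) := Real.exp_pos _
  nlinarith

/-- Geometric convergence of the relaxation scheme when `nμ < 1`: with
`c = √((M + γnμ − γ)/(M − γnμ + γ)) ∈ [0,1)`, one has for every `k ≥ 1`
`max_{[0,T]} |R_k − R| ≤ c^k · max_{[0,T]} |R|`. -/
theorem relaxation_geometric_convergence
    (β γ n a N μ M T c : ℝ) (hβ : 0 < β) (hγ : 0 < γ) (hn : 1 < n) (ha : 1 ≤ a)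
    (hN : N = n + a) (hμ : μ = β / γ) (hsmall : n * μ < 1) (hM : γ ≤ M) (hT : 0 < T)
    (hc : c = Real.sqrt ((M + γ * n * μ - γ) / (M - γ * n * μ + γ)))
    (g : ℝ → ℝ) (hg : ∀ r, g r = γ * n * Real.exp (-(μ * r)) + γ * r)
    (R : ℝ → ℝ)
    (hRode : ∀ t ∈ Set.Icc (0 : ℝ) T,
      HasDerivAt R (γ * (N - n * Real.exp (-(μ * R t)) - R t)) t)
    (hRinit : R 0 = 0)
    (hRpos : ∀ t ∈ Set.Icc (0 : ℝ) T, 0 ≤ R t)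
    (Rs : ℕ → ℝ → ℝ)
    (hRs0 : ∀ t, Rs 0 t = 0)
    (hinit : ∀ k, Rs k 0 = 0)
    (hode : ∀ k, ∀ t ∈ Set.Icc (0 : ℝ) T,
      HasDerivAt (Rs (k + 1)) (γ * N - g (Rs k t) + M * Rs k t - M * Rs (k + 1) t) t)
    (hpos : ∀ k, ∀ t ∈ Set.Icc (0 : ℝ) T, 0 ≤ Rs k t) :
    (0 ≤ c ∧ c < 1) ∧
    ∀ k : ℕ, 1 ≤ k → ∀ t ∈ Set.Icc (0 : ℝ) T,
      |Rs k t - R t| ≤ c ^ k * sSup ((fun s => |R s|) '' Set.Icc (0 : ℝ) T) := by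
  have hμpos : 0 < μ := by rw [hμ]; positivity
  have hnμ : 0 < n * μ := by positivity
  have hMpos : 0 < M := lt_of_lt_of_le hγ hM
  set L : ℝ := M - γ + γ * n * μ with hL
  set u : ℝ := γ - γ * n * μ with hu
  have hupos : 0 < u := by
    have : γ * n * μ < γ * 1 := by
      rw [mul_assoc]; exact (mul_lt_mul_iff_right₀ hγ).mpr hsmall
    simp only [hu]; linarith
  have hLpos : 0 < L := by
    have : 0 < γ * n * μ := by positivity
    simp only [hL]; linarith
  have hLMu : L = M - u := by simp only [hL, hu]; ring
  have hc0 : 0 ≤ c := by rw [hc]; exact Real.sqrt_nonneg _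
  have hMu : 0 < M + u := by linarith
  have hcsq : c = Real.sqrt (L / (M + u)) := by
    rw [hc]; congr 1; simp only [hL, hu]; ring_nf
  have hc1 : c < 1 := by
    rw [hcsq]
    rw [Real.sqrt_lt' one_pos]
    rw [div_lt_iff₀ hMu]
    nlinarith
  -- L / M ≤ c
  have hLMc : L / M ≤ c := by
    rw [hcsq]
    rw [Real.le_sqrt (by positivity) (by positivity)]
    rw [div_pow, div_le_div_iff₀ (by positivity) hMu]
    have hML : 0 < M - u := hLMu ▸ hLpos
    rw [hLMu]
    nlinarith [mul_nonneg hML.le (sq_nonneg u)]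
  -- continuity of R and sup bound
  have hRcont : ContinuousOn R (Set.Icc (0 : ℝ) T) :=
    fun t ht => ((hRode t ht).differentiableAt.continuousAt).continuousWithinAt
  set B : ℝ := sSup ((fun s => |R s|) '' Set.Icc (0 : ℝ) T) with hBdef
  have h0mem : (0 : ℝ) ∈ Set.Icc (0 : ℝ) T := ⟨le_refl _, hT.le⟩
  have hbdd : BddAbove ((fun s => |R s|) '' Set.Icc (0 : ℝ) T) :=
    isCompact_Icc.bddAbove_image hRcont.abs
  have hB : ∀ t ∈ Set.Icc (0 : ℝ) T, |R t| ≤ B :=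
    fun t ht => le_csSup hbdd ⟨t, ht, rfl⟩
  have hB0 : 0 ≤ B := le_trans (abs_nonneg _) (hB 0 h0mem)
  -- the Lipschitz function φ r = (M - γ) r - γ n exp(-μ r)
  have hlip : ∀ x y : ℝ, 0 ≤ x → 0 ≤ y →
      |((M - γ) * x - γ * n * Real.exp (-(μ * x))) -
        ((M - γ) * y - γ * n * Real.exp (-(μ * y)))| ≤ L * |x - y| := by
    intro x y hx hy
    have key : ∀ x y : ℝ, 0 ≤ x → x ≤ y →
        |((M - γ) * x - γ * n * Real.exp (-(μ * x))) -
          ((M - γ) * y - γ * n * Real.exp (-(μ * y)))| ≤ L * |x - y| := by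
      intro x y hx hxy
      have hexp := relax_exp_lip hμpos.le hx hxy
      have habs : |x - y| = y - x := by rw [abs_sub_comm]; exact abs_of_nonneg (by linarith)
      rw [habs]
      have tri : |((M - γ) * x - γ * n * Real.exp (-(μ * x))) -
          ((M - γ) * y - γ * n * Real.exp (-(μ * y)))| ≤
          (M - γ) * (y - x) + γ * n * |Real.exp (-(μ * x)) - Real.exp (-(μ * y))| := by
        have h1 : ((M - γ) * x - γ * n * Real.exp (-(μ * x))) -
            ((M - γ) * y - γ * n * Real.exp (-(μ * y))) =
            (M - γ) * (x - y) + γ * n * (Real.exp (-(μ * y)) - Real.exp (-(μ * x))) := by ring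
        rw [h1]
        refine (abs_add_le _ _).trans ?_
        gcongr
        · rw [abs_mul, abs_of_nonneg (by linarith : (0:ℝ) ≤ M - γ), abs_sub_comm,
            abs_of_nonneg (by linarith : (0:ℝ) ≤ y - x)]
        · rw [abs_mul, abs_of_nonneg (by positivity : (0:ℝ) ≤ γ * n), abs_sub_comm]
      refine tri.trans ?_
      have hγn : (0:ℝ) ≤ γ * n := by positivity
      have h2 : γ * n * |Real.exp (-(μ * x)) - Real.exp (-(μ * y))| ≤ γ * n * (μ * (y - x)) :=
        mul_le_mul_of_nonneg_left hexp hγn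
      simp only [hL]; nlinarith
    rcases le_total x y with h | h
    · exact key x y hx h
    · have := key y x hy h
      rwa [abs_sub_comm, abs_sub_comm y x] at this
  -- main induction
  have main : ∀ k : ℕ, ∀ t ∈ Set.Icc (0 : ℝ) T, |Rs k t - R t| ≤ c ^ k * B := by
    intro k
    induction k with
    | zero =>
      intro t ht
      simp only [hRs0, pow_zero, one_mul, zero_sub, abs_neg]
      exact hB t ht
    | succ k ih =>
      set C : ℝ := L * (c ^ k * B) with hCdef
      have hCpos : 0 ≤ C := by positivity
      set d : ℝ → ℝ := fun t => Rs (k + 1) t - R t with hd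
      set h : ℝ → ℝ := fun t =>
        ((M - γ) * Rs k t - γ * n * Real.exp (-(μ * Rs k t))) -
        ((M - γ) * R t - γ * n * Real.exp (-(μ * R t))) with hh
      have hd0 : d 0 = 0 := by simp [hd, hinit, hRinit]
      have hder : ∀ t ∈ Set.Icc (0 : ℝ) T, HasDerivAt d (-M * d t + h t) t := by
        intro t ht
        have h1 := (hode k t ht).sub (hRode t ht)
        refine h1.congr_deriv ?_
        rw [hg]
        simp only [hd, hh]
        ring
      have hhb : ∀ t ∈ Set.Icc (0 : ℝ) T, |h t| ≤ C := by
        intro t ht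
        refine (hlip (Rs k t) (R t) (hpos k t ht) (hRpos t ht)).trans ?_
        rw [hCdef]
        exact mul_le_mul_of_nonneg_left (ih t ht) hLpos.le
      intro t ht
      have := relax_abs_bound M C T hMpos hCpos d h hd0 hder hhb t ht
      refine this.trans ?_
      have h1 : C / M = (L / M) * (c ^ k * B) := by rw [hCdef]; ring
      rw [h1, pow_succ]
      calc L / M * (c ^ k * B) ≤ c * (c ^ k * B) :=
            mul_le_mul_of_nonneg_right hLMc (by positivity)
        _ = c ^ k * c * B := by ring
  exact ⟨⟨hc0, hc1⟩, fun k _ t ht => main k t ht⟩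
end

section
/- Assume nμ ≤ 1 and M ≥ γ. Then the iterates of the relaxation scheme satisfy, for every k ≥ 1 and t ≥ 0, the pointwise bound |R_k(t)| ≤ γ·a·∑_{i=1}^{k} (M − γ)^{i−1}·t^{i}/i!, where a = N − n. -/
/-- Auxiliary series: `P c k t = ∑_{j<k} c^j t^{j+1}/(j+1)!`. -/
noncomputable def relaxPaux (c : ℝ) (k : ℕ) (t : ℝ) : ℝ :=
  ∑ j ∈ Finset.range k, c ^ j / (Nat.factorial (j + 1) : ℝ) * t ^ (j + 1)

lemma relaxPaux_nonneg (c : ℝ) (hc : 0 ≤ c) (k : ℕ) (t : ℝ) (ht : 0 ≤ t) :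
    0 ≤ relaxPaux c k t := by
  apply Finset.sum_nonneg
  intro j _
  have : (0 : ℝ) < (Nat.factorial (j + 1) : ℝ) := by positivity
  positivity

lemma relaxPaux_mono (c : ℝ) (hc : 0 ≤ c) (k : ℕ) (t : ℝ) (ht : 0 ≤ t) :
    relaxPaux c k t ≤ relaxPaux c (k + 1) t := by
  rw [relaxPaux, relaxPaux, Finset.sum_range_succ]
  have h1 : (0 : ℝ) < (Nat.factorial (k + 1) : ℝ) := by positivity
  have h2 : 0 ≤ c ^ k / (Nat.factorial (k + 1) : ℝ) * t ^ (k + 1) := by positivity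
  linarith

lemma relaxPaux_hasDerivAt (c : ℝ) (k : ℕ) (t : ℝ) :
    HasDerivAt (fun s => relaxPaux c (k + 1) s) (1 + c * relaxPaux c k t) t := by
  have h : ∀ j ∈ Finset.range (k + 1),
      HasDerivAt (fun s : ℝ => c ^ j / (Nat.factorial (j + 1) : ℝ) * s ^ (j + 1))
        (c ^ j / (Nat.factorial (j + 1) : ℝ) * (((j : ℝ) + 1) * t ^ j)) t := by
    intro j _
    have := (hasDerivAt_pow (j + 1) t).const_mul (c ^ j / (Nat.factorial (j + 1) : ℝ))
    simpa using this
  have hsum := HasDerivAt.fun_sum h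
  refine hsum.congr_deriv (Eq.symm ?_)
  rw [Finset.sum_range_succ']
  have h0 : c ^ 0 / (Nat.factorial (0 + 1) : ℝ) * (((0 : ℕ) : ℝ) + 1) * t ^ 0 = 1 := by
    norm_num
  rw [relaxPaux, Finset.mul_sum]
  have hterm : ∀ j ∈ Finset.range k,
      c * (c ^ j / (Nat.factorial (j + 1) : ℝ) * t ^ (j + 1)) =
      c ^ (j + 1) / (Nat.factorial (j + 1 + 1) : ℝ) * ((((j : ℝ) + 1) + 1) * t ^ (j + 1)) := by
    intro j _
    have hfac : (Nat.factorial (j + 2) : ℝ) = ((j : ℝ) + 2) * (Nat.factorial (j + 1) : ℝ) := by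
      rw [Nat.factorial_succ]
      push_cast
      ring
    have hf1 : (0 : ℝ) < (Nat.factorial (j + 1) : ℝ) := by positivity
    have hf2 : (0 : ℝ) < (Nat.factorial (j + 2) : ℝ) := by positivity
    field_simp
    rw [hfac]
    ring
  rw [Finset.sum_congr rfl hterm]
  push_cast
  ring_nf
  norm_num [Nat.factorial]
  ring

/-- Reindexing: sum over `Icc 1 k` equals sum over `range k` shifted. -/
lemma relax_sum_Icc_eq (f : ℕ → ℝ) (k : ℕ) :
    ∑ i ∈ Finset.Icc 1 k, f i = ∑ j ∈ Finset.range k, f (j + 1) := by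
  induction k with
  | zero => simp
  | succ k ih => rw [Finset.sum_Icc_succ_top (by omega), ih, Finset.sum_range_succ]

/-- Pointwise bound for the relaxation iterates when `nμ ≤ 1` and `M ≥ γ`: for every
`k ≥ 1` and `t ≥ 0`, `|R_k(t)| ≤ γ·a·∑_{i=1}^{k} (M − γ)^{i−1}·t^{i}/i!` with `a = N − n`. -/
theorem relaxation_pointwise_bound
    (β γ n a N μ M : ℝ) (hβ : 0 < β) (hγ : 0 < γ) (hn : 1 < n) (ha : 1 ≤ a)
    (hN : N = n + a) (hμ : μ = β / γ) (hsmall : n * μ ≤ 1) (hM : γ ≤ M)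
    (g : ℝ → ℝ) (hg : ∀ r, g r = γ * n * Real.exp (-(μ * r)) + γ * r)
    (R : ℕ → ℝ → ℝ)
    (hR0 : ∀ t, R 0 t = 0)
    (hinit : ∀ k, R k 0 = 0)
    (hode : ∀ k t, 0 ≤ t →
      HasDerivAt (R (k + 1)) (γ * N - g (R k t) + M * R k t - M * R (k + 1) t) t)
    (hpos : ∀ k t, 0 ≤ t → 0 ≤ R k t)
    (hglow : ∀ k t, 0 ≤ t → γ * n ≤ g (R k t)) :
    ∀ k : ℕ, 1 ≤ k → ∀ t : ℝ, 0 ≤ t →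
      |R k t| ≤ γ * a *
        ∑ i ∈ Finset.Icc 1 k, (M - γ) ^ (i - 1) * t ^ i / (Nat.factorial i : ℝ) := by
  set c := M - γ with hc
  have hc0 : 0 ≤ c := sub_nonneg.mpr hM
  have ha0 : (0 : ℝ) ≤ a := le_trans zero_le_one ha
  have hM0 : 0 ≤ M := le_trans hγ.le hM
  -- main induction: R k t ≤ γ a P k t for all k and t ≥ 0
  have key : ∀ k, ∀ t, 0 ≤ t → R k t ≤ γ * a * relaxPaux c k t := by
    intro k
    induction k with
    | zero => intro t ht; simp [hR0, relaxPaux]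
    | succ k ih =>
      intro t ht
      set F : ℝ → ℝ := fun s => Real.exp (M * s) * (R (k + 1) s - γ * a * relaxPaux c (k + 1) s)
        with hF
      have hFd : ∀ s, 0 ≤ s → HasDerivAt F
          (Real.exp (M * s) * ((γ * N - g (R k s) + M * R k s - M * R (k + 1) s)
            - γ * a * (1 + c * relaxPaux c k s)
            + M * (R (k + 1) s - γ * a * relaxPaux c (k + 1) s))) s := by
        intro s hs
        have he : HasDerivAt (fun u : ℝ => Real.exp (M * u)) (Real.exp (M * s) * M) s := by
          simpa using ((hasDerivAt_id s).const_mul M).exp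
        have hin : HasDerivAt (fun u => R (k + 1) u - γ * a * relaxPaux c (k + 1) u)
            ((γ * N - g (R k s) + M * R k s - M * R (k + 1) s)
              - γ * a * (1 + c * relaxPaux c k s)) s :=
          (hode k s hs).sub ((relaxPaux_hasDerivAt c k s).const_mul (γ * a))
        have := he.mul hin
        refine this.congr_deriv (Eq.symm ?_)
        ring
      have hF0 : F 0 = 0 := by
        simp [hF, hinit, relaxPaux]
      have hFanti : AntitoneOn F (Set.Icc 0 t) := by
        apply antitoneOn_of_deriv_nonpos (convex_Icc 0 t)
        · intro s hs
          exact (hFd s hs.1).continuousAt.continuousWithinAt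
        · intro s hs
          rw [interior_Icc] at hs
          exact ((hFd s hs.1.le).differentiableAt.differentiableWithinAt)
        · intro s hs
          rw [interior_Icc] at hs
          rw [(hFd s hs.1.le).deriv]
          have h1 : γ * N - g (R k s) ≤ γ * a := by
            have := hglow k s hs.1.le
            rw [hN]; nlinarith
          have h2 : R k s ≤ γ * a * relaxPaux c k s := ih s hs.1.le
          have h3 : relaxPaux c k s ≤ relaxPaux c (k + 1) s :=
            relaxPaux_mono c hc0 k s hs.1.le
          have h4 : 0 ≤ relaxPaux c k s := relaxPaux_nonneg c hc0 k s hs.1.le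
          have hexp : 0 < Real.exp (M * s) := Real.exp_pos _
          have hP : 0 ≤ γ * a := by positivity
          apply mul_nonpos_of_nonneg_of_nonpos hexp.le
          have hcP : 0 ≤ γ * a * (c * relaxPaux c k s) := by positivity
          nlinarith [mul_le_mul_of_nonneg_left h3 hM0, mul_le_mul_of_nonneg_left h2 hM0]
      have hle : F t ≤ F 0 :=
        hFanti (Set.left_mem_Icc.mpr ht) (Set.right_mem_Icc.mpr ht) ht
      rw [hF0] at hle
      have hexp : 0 < Real.exp (M * t) := Real.exp_pos _
      have : R (k + 1) t - γ * a * relaxPaux c (k + 1) t ≤ 0 := by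
        by_contra h
        push_neg at h
        have : 0 < F t := mul_pos hexp h
        linarith
      linarith
  intro k hk t ht
  rw [abs_of_nonneg (hpos k t ht)]
  have hkey := key k t ht
  have hsum : ∑ i ∈ Finset.Icc 1 k, (M - γ) ^ (i - 1) * t ^ i / (Nat.factorial i : ℝ)
      = relaxPaux c k t := by
    rw [relax_sum_Icc_eq (fun i => (M - γ) ^ (i - 1) * t ^ i / (Nat.factorial i : ℝ)) k]
    apply Finset.sum_congr rfl
    intro j _
    simp [hc]
    ring
  rw [hsum]
  exact hkey
end

section
/- Assume nμ ≤ 1 and γ ≤ M ≤ γ + 1/T. Then the relaxation scheme is uniformly bounded independently of k: for every k ≥ 0 and every t ∈ [0,T], |R_k(t)| ≤ T·γ·a·(e − 1), where a = N − n and e is Euler's number. -/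
/-- Uniform boundedness of the relaxation scheme when `nμ ≤ 1` and `γ ≤ M ≤ γ + 1/T`:
for every `k` and every `t ∈ [0,T]`, `|R_k(t)| ≤ T·γ·a·(e − 1)` with `a = N − n`. -/
theorem relaxation_uniform_bound
    (β γ n a N μ M T : ℝ) (hβ : 0 < β) (hγ : 0 < γ) (hn : 1 < n) (ha : 1 ≤ a)
    (hN : N = n + a) (hμ : μ = β / γ) (hsmall : n * μ ≤ 1) (hT : 0 < T)
    (hM : γ ≤ M) (hM' : M ≤ γ + 1 / T)
    (g : ℝ → ℝ) (hg : ∀ r, g r = γ * n * Real.exp (-(μ * r)) + γ * r)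
    (R : ℕ → ℝ → ℝ)
    (hR0 : ∀ t, R 0 t = 0)
    (hinit : ∀ k, R k 0 = 0)
    (hode : ∀ k, ∀ t ∈ Set.Icc (0 : ℝ) T,
      HasDerivAt (R (k + 1)) (γ * N - g (R k t) + M * R k t - M * R (k + 1) t) t)
    (hpos : ∀ k, ∀ t ∈ Set.Icc (0 : ℝ) T, 0 ≤ R k t)
    (hglow : ∀ k, ∀ t ∈ Set.Icc (0 : ℝ) T, γ * n ≤ g (R k t)) :
    ∀ k : ℕ, ∀ t ∈ Set.Icc (0 : ℝ) T,
      |R k t| ≤ T * γ * a * (Real.exp 1 - 1) := by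
  have hM0 : 0 < M := lt_of_lt_of_le hγ hM
  -- key estimate: R k t ≤ γ * a * t
  have key : ∀ k : ℕ, ∀ t ∈ Set.Icc (0 : ℝ) T, R k t ≤ γ * a * t := by
    intro k
    induction k with
    | zero =>
      intro t ht
      rw [hR0]
      have h0t : (0:ℝ) ≤ t := ht.1
      have ha0 : (0:ℝ) ≤ a := by linarith
      positivity
    | succ k ih =>
      set f : ℝ → ℝ := fun t => Real.exp (M * t) * (R (k + 1) t - γ * a * t) with hf
      have hderiv : ∀ t ∈ Set.Icc (0 : ℝ) T,
          HasDerivAt f (Real.exp (M * t) * M * (R (k + 1) t - γ * a * t)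
            + Real.exp (M * t) *
              ((γ * N - g (R k t) + M * R k t - M * R (k + 1) t) - γ * a)) t := by
        intro t ht
        have h1 : HasDerivAt (fun t => Real.exp (M * t)) (Real.exp (M * t) * M) t := by
          have := ((hasDerivAt_id t).const_mul M).exp
          simpa using this
        have h2 : HasDerivAt (fun t => R (k + 1) t - γ * a * t)
            ((γ * N - g (R k t) + M * R k t - M * R (k + 1) t) - γ * a) t := by
          have := (hode k t ht).sub ((hasDerivAt_id t).const_mul (γ * a))
          exact this.congr_deriv (by ring)
        exact h1.mul h2
      have hdnp : ∀ t ∈ Set.Icc (0 : ℝ) T,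
          Real.exp (M * t) * M * (R (k + 1) t - γ * a * t)
            + Real.exp (M * t) *
              ((γ * N - g (R k t) + M * R k t - M * R (k + 1) t) - γ * a) ≤ 0 := by
        intro t ht
        have hex : (0:ℝ) < Real.exp (M * t) := Real.exp_pos _
        have h1 : γ * n ≤ g (R k t) := hglow k t ht
        have h2 : R k t ≤ γ * a * t := ih t ht
        have h3 : M * R k t ≤ M * (γ * a * t) := by
          exact mul_le_mul_of_nonneg_left h2 hM0.le
        have : M * (R (k + 1) t - γ * a * t)
            + ((γ * N - g (R k t) + M * R k t - M * R (k + 1) t) - γ * a) ≤ 0 := by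
          rw [hN] at *
          nlinarith
        nlinarith
      have hcont : ContinuousOn f (Set.Icc 0 T) := fun t ht =>
        (hderiv t ht).continuousAt.continuousWithinAt
      have hanti : AntitoneOn f (Set.Icc 0 T) := by
        apply antitoneOn_of_deriv_nonpos (convex_Icc 0 T) hcont
        · intro x hx
          rw [interior_Icc] at hx
          exact (hderiv x (Set.mem_Icc_of_Ioo hx)).differentiableAt.differentiableWithinAt
        · intro x hx
          rw [interior_Icc] at hx
          have hx' : x ∈ Set.Icc (0:ℝ) T := Set.mem_Icc_of_Ioo hx
          rw [(hderiv x hx').deriv]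
          exact hdnp x hx'
      intro t ht
      have h0 : (0:ℝ) ∈ Set.Icc (0:ℝ) T := ⟨le_refl _, hT.le⟩
      have hft : f t ≤ f 0 := hanti h0 ht ht.1
      have hf0 : f 0 = 0 := by simp [hf, hinit]
      rw [hf0] at hft
      have hex : (0:ℝ) < Real.exp (M * t) := Real.exp_pos _
      have hft' : Real.exp (M * t) * (R (k + 1) t - γ * a * t) ≤ 0 := hft
      nlinarith [hex, hft']
  intro k t ht
  rw [abs_of_nonneg (hpos k t ht)]
  have h1 : R k t ≤ γ * a * t := key k t ht
  have h2 : t ≤ T := ht.2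
  have he : (2:ℝ) ≤ Real.exp 1 := by
    have := Real.add_one_le_exp 1
    linarith
  have ha0 : (0:ℝ) < a := lt_of_lt_of_le one_pos ha
  have h3 : γ * a * t ≤ γ * a * T := mul_le_mul_of_nonneg_left h2 (by positivity)
  have hpTga : (0:ℝ) ≤ T * γ * a := by positivity
  calc R k t ≤ γ * a * t := h1
    _ ≤ γ * a * T := h3
    _ = T * γ * a * 1 := by ring
    _ ≤ T * γ * a * (Real.exp 1 - 1) := by
        apply mul_le_mul_of_nonneg_left (by linarith) hpTga
end

section
/- If (S, I, R, D) is a C¹ solution of the SIRD system on [0,∞) with S(0) = n, I(0) = a, R(0) = 0, D(0) = 0 (so that S(t) > 0 for all t ≥ 0), then the number of infectives is bounded by the amplitude: I(t) ≤ ((γ+σ)/β)·ln((γ+σ)/β) − (γ+σ)/β + a + n − ((γ+σ)/β)·ln(n) for all t ≥ 0. -/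
/-- Amplitude bound for the SIRD model: any `C¹` solution (with `S > 0` on `[0,∞)`)
satisfies `I(t) ≤ ((γ+σ)/β)·ln((γ+σ)/β) − (γ+σ)/β + a + n − ((γ+σ)/β)·ln(n)`. -/
theorem sird_amplitude_bound
    (β γ σ n a : ℝ) (hβ : 0 < β) (hγ : 0 < γ) (hσ : 0 < σ) (hn : 1 < n) (ha : 1 ≤ a)
    (S I R D : ℝ → ℝ)
    (hI : ∀ t, 0 ≤ t → HasDerivAt I (β * S t * I t - (γ + σ) * I t) t)
    (hS : ∀ t, 0 ≤ t → HasDerivAt S (-(β * S t * I t)) t)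
    (hR : ∀ t, 0 ≤ t → HasDerivAt R (γ * I t) t)
    (hD : ∀ t, 0 ≤ t → HasDerivAt D (σ * I t) t)
    (hS0 : S 0 = n) (hI0 : I 0 = a) (hR0 : R 0 = 0) (hD0 : D 0 = 0)
    (hSpos : ∀ t, 0 ≤ t → 0 < S t) :
    ∀ t, 0 ≤ t →
      I t ≤ (γ + σ) / β * Real.log ((γ + σ) / β) - (γ + σ) / β + a + n -
        (γ + σ) / β * Real.log n := by
  set ρ : ℝ := (γ + σ) / β with hρdef
  have hρ : 0 < ρ := div_pos (by linarith) hβ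
  have hβρ : β * ρ = γ + σ := by rw [hρdef]; field_simp
  set F : ℝ → ℝ := fun t => I t + S t - ρ * Real.log (S t) with hFdef
  have hF : ∀ t, 0 ≤ t → HasDerivAt F 0 t := by
    intro t ht
    have hS0' : S t ≠ 0 := (hSpos t ht).ne'
    have hlog : HasDerivAt (fun u => Real.log (S u)) ((S t)⁻¹ * (-(β * S t * I t))) t :=
      (Real.hasDerivAt_log hS0').comp t (hS t ht)
    have := ((hI t ht).add (hS t ht)).sub (hlog.const_mul ρ)
    have h1 : (S t)⁻¹ * -(β * S t * I t) = -(β * I t) := by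
      field_simp
    exact this.congr_deriv (by rw [h1, ← hβρ]; ring)
  intro t ht
  have hconst : F t = F 0 := by
    apply constant_of_has_deriv_right_zero (f := F) (a := 0) (b := t)
    · intro x hx
      exact (hF x hx.1).continuousAt.continuousWithinAt
    · intro x hx
      exact (hF x hx.1).hasDerivWithinAt
    · exact ⟨ht, le_refl t⟩
  have hF0 : F 0 = a + n - ρ * Real.log n := by
    simp [hFdef, hS0, hI0]
  have hmax : ρ * Real.log (S t) - S t ≤ ρ * Real.log ρ - ρ := by
    have hx : 0 < S t / ρ := div_pos (hSpos t ht) hρ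
    have := Real.log_le_sub_one_of_pos hx
    rw [Real.log_div (hSpos t ht).ne' hρ.ne'] at this
    have h2 : ρ * (Real.log (S t) - Real.log ρ) ≤ ρ * (S t / ρ - 1) :=
      mul_le_mul_of_nonneg_left this hρ.le
    have h3 : ρ * (S t / ρ - 1) = S t - ρ := by field_simp
    linarith [h2, h3 ▸ h2]
  have hIt : I t = F t - S t + ρ * Real.log (S t) := by simp [hFdef]; ring
  rw [hIt, hconst, hF0]
  linarith
end
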